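/- Define β(ρ²) = (D'(ρ²) − D'(0)) / √(D(ρ²) − D'(ρ²)²ρ²/D'(0)). Under the hypotheses D(0)=0, D C⁴ near 0, D''(0)<0, one has lim_{ρ→0⁺} β(ρ²)² = −(2/3) D''(0). -/

import Mathlib

open Real Filter Topology

/-- With `β(y) = (D'(y) − D'(0))/√(D(y) − D'(y)²y/D'(0))`, if `D(0)=0`, `D` is C⁴ near 0,
`D'(0) > 0` and `D''(0) < 0`, then `lim_{ρ→0⁺} β(ρ²)² = −(2/3) D''(0)`. -/
theorem stmt6 (D : ℝ → ℝ) (hD0 : D 0 = 0)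
    (hsmooth : ContDiffAt ℝ 4 D 0)
    (hD'0 : 0 < deriv D 0)
    (hD''0 : iteratedDeriv 2 D 0 < 0) :
    Filter.Tendsto
      (fun ρ : ℝ =>
        ((deriv D (ρ ^ 2) - deriv D 0) /
            Real.sqrt (D (ρ ^ 2) - (deriv D (ρ ^ 2)) ^ 2 * ρ ^ 2 / deriv D 0)) ^ 2)
      (nhdsWithin 0 (Set.Ioi 0))
      (nhds (-(2 / 3) * iteratedDeriv 2 D 0)) := by
  set a := deriv D 0 with ha
  set b := iteratedDeriv 2 D 0 with hb
  have ha0 : a ≠ 0 := ne_of_gt hD'0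
  have hb0 : b ≠ 0 := ne_of_lt hD''0
  -- get a neighborhood where D is C²
  obtain ⟨u, hu, hDu⟩ := hsmooth.contDiffOn (m := 2) (by norm_num) (by simp)
  obtain ⟨V, hVu, hVopen, hV0⟩ := mem_nhds_iff.1 hu
  have hDV : ContDiffOn ℝ 2 D V := hDu.mono hVu
  have hD'V : ContDiffOn ℝ 1 (deriv D) V := hDV.deriv_of_isOpen hVopen (by norm_num)
  have hVn : V ∈ 𝓝 (0:ℝ) := hVopen.mem_nhds hV0
  have hVev : ∀ᶠ y in 𝓝[>] (0:ℝ), y ∈ V := eventually_nhdsWithin_of_eventually_nhds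
    (eventually_of_mem hVn fun x hx => hx)
  -- D' is differentiable at 0 with derivative b
  have hb2 : iteratedDeriv 2 D = deriv (deriv D) := by
    rw [show (2:ℕ) = 1 + 1 from rfl, iteratedDeriv_succ, iteratedDeriv_one]
  have hD'diff : HasDerivAt (deriv D) b 0 := by
    have := ((hD'V.contDiffAt hVn).differentiableAt (by norm_num)).hasDerivAt
    rwa [hb, hb2]
  -- h1 : slope of deriv D at 0
  have h1 : Tendsto (fun y => (deriv D y - a) / y) (𝓝[>] (0:ℝ)) (𝓝 b) := by
    have := (hasDerivAt_iff_tendsto_slope.1 hD'diff).mono_left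
      (nhdsWithin_mono _ fun x (hx : x ∈ Set.Ioi 0) => ne_of_gt hx)
    refine this.congr' ?_
    filter_upwards [self_mem_nhdsWithin] with y hy
    simp [slope_def_field, div_eq_div_iff (ne_of_gt (Set.mem_Ioi.1 hy)) (ne_of_gt (Set.mem_Ioi.1 hy)), ha]
  -- continuity of deriv D at 0 (within nhds)
  have hD'cont : Tendsto (deriv D) (𝓝[>] (0:ℝ)) (𝓝 a) := by
    exact (hD'V.contDiffAt hVn).continuousAt.tendsto.mono_left nhdsWithin_le_nhds
  have hDcont : Tendsto D (𝓝[>] (0:ℝ)) (𝓝 0) := by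
    have h := hsmooth.continuousAt.tendsto.mono_left
      (nhdsWithin_le_nhds : 𝓝[>] (0:ℝ) ≤ 𝓝 0)
    simpa [hD0] using h
  -- h2 : second order behavior via L'Hôpital
  have h2 : Tendsto (fun y => (D y - a * y) / y ^ 2) (𝓝[>] (0:ℝ)) (𝓝 (b / 2)) := by
    apply HasDerivAt.lhopital_zero_nhdsGT
      (f' := fun y => deriv D y - a) (g' := fun y => 2 * y)
    · filter_upwards [hVev] with y hy
      have hDd : HasDerivAt D (deriv D y) y :=
        (((hDV.contDiffAt (hVopen.mem_nhds hy)).differentiableAt (by norm_num))).hasDerivAt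
      simpa using hDd.fun_sub ((hasDerivAt_id y).const_mul a)
    · filter_upwards with y
      simpa using (hasDerivAt_pow 2 y)
    · filter_upwards [self_mem_nhdsWithin] with y hy
      exact mul_ne_zero two_ne_zero (ne_of_gt hy)
    · have hlin : Tendsto (fun y : ℝ => a * y) (𝓝[>] (0:ℝ)) (𝓝 0) := by
        have h : Tendsto (fun y : ℝ => a * y) (𝓝 (0:ℝ)) (𝓝 (a * 0)) :=
          tendsto_id.const_mul a
        simpa using h.mono_left (nhdsWithin_le_nhds : 𝓝[>] (0:ℝ) ≤ 𝓝 0)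
      simpa using hDcont.sub hlin
    · have : Tendsto (fun y : ℝ => y ^ 2) (𝓝[>] 0) (𝓝 0) := by
        have := (continuous_pow 2).tendsto (0:ℝ)
        simpa using this.mono_left nhdsWithin_le_nhds
      exact this
    · have := h1.div_const 2
      refine this.congr' ?_
      filter_upwards [self_mem_nhdsWithin] with y hy
      field_simp
  -- denominator limit
  have hden : Tendsto (fun y => (D y - (deriv D y) ^ 2 * y / a) / y ^ 2)
      (𝓝[>] (0:ℝ)) (𝓝 (-(3/2) * b)) := by
    have h3 : Tendsto (fun y => (deriv D y + a) / a) (𝓝[>] (0:ℝ)) (𝓝 2) := by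
      have h := (hD'cont.add_const a).div_const a
      rw [show (a + a) / a = 2 by field_simp; ring] at h
      exact h
    have := h2.sub (h1.mul h3)
    have hlim : b / 2 - b * 2 = -(3/2) * b := by ring
    rw [hlim] at this
    refine this.congr' ?_
    filter_upwards [self_mem_nhdsWithin] with y hy
    have hy0 : y ≠ 0 := ne_of_gt hy
    field_simp
    ring
  -- numerator limit
  have hnum : Tendsto (fun y => ((deriv D y - a) / y) ^ 2) (𝓝[>] (0:ℝ)) (𝓝 (b ^ 2)) := by
    simpa using h1.pow 2
  -- ratio limit
  have hne : -(3/2) * b ≠ 0 := mul_ne_zero (by norm_num) hb0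
  have hratio : Tendsto (fun y => (deriv D y - a) ^ 2 / (D y - (deriv D y) ^ 2 * y / a))
      (𝓝[>] (0:ℝ)) (𝓝 (-(2/3) * b)) := by
    have := hnum.div hden hne
    have hval : b ^ 2 / (-(3/2) * b) = -(2/3) * b := by
      field_simp
    rw [hval] at this
    refine this.congr' ?_
    filter_upwards [self_mem_nhdsWithin] with y hy
    have hy0 : y ≠ 0 := ne_of_gt hy
    have hy2 : (y:ℝ) ^ 2 ≠ 0 := pow_ne_zero 2 hy0
    simp only [Pi.div_apply]
    rw [div_pow, div_div_div_cancel_right₀ hy2]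
  -- denominator eventually positive
  have hpos : ∀ᶠ y in 𝓝[>] (0:ℝ), 0 < D y - (deriv D y) ^ 2 * y / a := by
    have hposlim : 0 < -(3/2) * b := by nlinarith
    filter_upwards [hden.eventually (eventually_gt_nhds hposlim), self_mem_nhdsWithin]
      with y hy hy'
    have hy2 : (0:ℝ) < y ^ 2 := pow_pos hy' 2
    have := mul_pos hy hy2
    rwa [div_mul_cancel₀] at this
    exact ne_of_gt hy2
  -- compose with ρ ↦ ρ²
  have hsq : Tendsto (fun ρ : ℝ => ρ ^ 2) (𝓝[>] (0:ℝ)) (𝓝[>] (0:ℝ)) := by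
    apply tendsto_nhdsWithin_of_tendsto_nhds_of_eventually_within
    · have := (continuous_pow 2).tendsto (0:ℝ)
      simpa using this.mono_left nhdsWithin_le_nhds
    · filter_upwards [self_mem_nhdsWithin] with ρ (hρ : (0:ℝ) < ρ)
      exact pow_pos hρ 2
  have hfinal := (hratio.comp hsq)
  refine hfinal.congr' ?_
  filter_upwards [hsq.eventually hpos] with ρ hρ
  have hs : Real.sqrt (D (ρ ^ 2) - (deriv D (ρ ^ 2)) ^ 2 * ρ ^ 2 / a) ^ 2
      = D (ρ ^ 2) - (deriv D (ρ ^ 2)) ^ 2 * ρ ^ 2 / a :=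
    Real.sq_sqrt (le_of_lt hρ)
  simp only [Function.comp]
  rw [div_pow, hs]
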